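/- Let E be a finite directed graph with adjacency matrix A_E ∈ ℤ^{reg(E)×E⁰} (where (A_E)_{v,w} is the number of edges from v to w, and reg(E) is the set of vertices emitting at least one and finitely many edges) and I ∈ ℤ^{E⁰×reg(E)} the matrix with I_{v,w} = δ_{v,w}. If E has at least one vertex, then the cokernel of the ℤ[σ,σ⁻¹]-linear map I − σ·A_E^t : ℤ[σ,σ⁻¹]^{reg(E)} → ℤ[σ,σ⁻¹]^{E⁰} is nonzero. -/

import Mathlib

open Matrix Polynomial

section auxiliary

/-- Evaluation of an integer Laurent polynomial at a unit of `ℂ`. -/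
noncomputable def evalLaurentAux (u : ℂˣ) : LaurentPolynomial ℤ →+* ℂ :=
  ((AddMonoidAlgebra.lift ℤ ℂ ℤ) ((Units.coeHom ℂ).comp (zpowersHom ℂˣ u))).toRingHom

lemma evalLaurentAux_T (u : ℂˣ) : evalLaurentAux u (LaurentPolynomial.T 1) = u := by
  have : (LaurentPolynomial.T 1 : LaurentPolynomial ℤ) = AddMonoidAlgebra.single 1 1 := rfl
  rw [evalLaurentAux, AlgHom.toRingHom_eq_coe, RingHom.coe_coe, this,
    AddMonoidAlgebra.lift_single]
  simp

lemma rightInvAux {R : Type*} [CommRing R] {m n : Type} [Fintype m] [Fintype n]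
    [DecidableEq n] {M : Matrix n m R} (h : Function.Surjective M.mulVec) :
    ∃ N : Matrix m n R, M * N = 1 := by
  choose x hx using h
  refine ⟨Matrix.of (fun w v => x (Pi.single v 1) w), ?_⟩
  ext i j
  have := congrFun (hx (Pi.single j 1)) i
  simp only [Matrix.mulVec, dotProduct] at this
  rw [Matrix.mul_apply, Matrix.one_apply]
  simp only [Matrix.of_apply]
  rw [this, Pi.single_apply]

lemma powNonnegAux {V : Type} [Fintype V] [DecidableEq V] {A : Matrix V V ℤ}
    (hA : ∀ i j, 0 ≤ A i j) : ∀ (k : ℕ) i j, 0 ≤ (A ^ k) i j := by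
  intro k
  induction k with
  | zero => intro i j; rw [pow_zero]; rw [Matrix.one_apply]; positivity
  | succ k ih =>
    intro i j
    rw [pow_succ, Matrix.mul_apply]
    exact Finset.sum_nonneg fun x _ => mul_nonneg (ih i x) (hA x j)

lemma powGeAux {V : Type} [Fintype V] [DecidableEq V] {A : Matrix V V ℤ}
    (hA : ∀ i j, 0 ≤ A i j) {f : V → V} (hf : ∀ v, 1 ≤ A (f v) v) :
    ∀ (k : ℕ) v, 1 ≤ (A ^ k) (f^[k] v) v := by
  intro k
  induction k with
  | zero => intro v; simp
  | succ k ih =>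
    intro v
    rw [pow_succ', Matrix.mul_apply]
    have h1 : 1 ≤ A (f^[k+1] v) (f^[k] v) * (A ^ k) (f^[k] v) v := by
      have := hf (f^[k] v)
      rw [← Function.iterate_succ_apply' f k v] at this
      nlinarith [ih v]
    refine le_trans h1 (Finset.single_le_sum (f := fun x => A (f^[k+1] v) x * (A ^ k) x v)
      (fun x _ => mul_nonneg (hA _ _) (powNonnegAux hA k x v)) (Finset.mem_univ (f^[k] v)))

lemma charpolyEqPowAux {n : Type} [Fintype n] [DecidableEq n]
    {B : Matrix n n ℂ} (h : B.charpoly.reverse = 1) :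
    B.charpoly = X ^ (Fintype.card n) := by
  have hm := B.charpoly_monic
  have hd : B.charpoly.natDegree = Fintype.card n := B.charpoly_natDegree_eq_dim
  ext j
  rcases lt_trichotomy j (Fintype.card n) with hj | hj | hj
  · have h1 : B.charpoly.reverse.coeff (Fintype.card n - j) = B.charpoly.coeff j := by
      rw [Polynomial.coeff_reverse, hd, Polynomial.revAt_le (Nat.sub_le _ _)]
      congr 1; omega
    rw [h, Polynomial.coeff_one, if_neg (by omega)] at h1
    rw [Polynomial.coeff_X_pow, if_neg hj.ne, ← h1]
  · rw [hj, Polynomial.coeff_X_pow, if_pos rfl, ← hd]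
    exact hm.coeff_natDegree
  · rw [Polynomial.coeff_X_pow, if_neg hj.ne',
      Polynomial.coeff_eq_zero_of_natDegree_lt (by omega)]

lemma evalCharpolyRevAux {n : Type} [Fintype n] [DecidableEq n] (B : Matrix n n ℂ) (z : ℂ) :
    (Matrix.charpolyRev B).eval z = (1 - z • B).det := by
  rw [Matrix.charpolyRev, ← Polynomial.coe_evalRingHom, RingHom.map_det]
  congr 1
  ext i j
  rw [RingHom.mapMatrix_apply]
  simp only [Matrix.map_apply, Matrix.sub_apply, Matrix.smul_apply, Matrix.one_apply,
    apply_ite (Polynomial.eval z), Polynomial.eval_sub, Polynomial.eval_mul, Polynomial.eval_X,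
    Polynomial.eval_C, Polynomial.eval_one, Polynomial.eval_zero, coe_evalRingHom, smul_eq_mul]

section graphAux

variable {V Ed : Type} [Fintype V] [Fintype Ed] [DecidableEq V] (s r : Ed → V)

/-- The square version of the matrix `I - σ A_E^t` (when every vertex is regular). -/
noncomputable def sqMAux : Matrix V V (LaurentPolynomial ℤ) :=
  Matrix.of fun v w =>
    (if v = w then 1 else 0)
      - LaurentPolynomial.T 1 * (Fintype.card {e : Ed // s e = w ∧ r e = v} : LaurentPolynomial ℤ)

/-- The transposed adjacency matrix over `ℤ`. -/
def adjMAux : Matrix V V ℤ :=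
  Matrix.of fun v w => (Fintype.card {e : Ed // s e = w ∧ r e = v} : ℤ)

end graphAux

end auxiliary

/-- For a finite directed graph `E` (with vertex type `V`, edge type `Ed`,
source `s` and range `r`) with at least one vertex, the cokernel of the
`ℤ[σ,σ⁻¹]`-linear map `I - σ·A_E^t : ℤ[σ,σ⁻¹]^{reg(E)} → ℤ[σ,σ⁻¹]^{E⁰}` is nonzero,
i.e. the map is not surjective.  Here `reg(E)` is the set of vertices emitting at
least one (and, `E` being finite, automatically finitely many) edges, and the matrix
has `(v,w)`-entry `δ_{v,w} - σ·(A_E)_{w,v}` where `(A_E)_{w,v}` counts edges from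
`w` to `v`. -/
theorem stmt_0 {V Ed : Type} [Fintype V] [Fintype Ed] [DecidableEq V]
    (s r : Ed → V) (hV : Nonempty V) :
    ¬ Function.Surjective
      (Matrix.mulVec
        (Matrix.of (fun (v : V) (w : {v : V // ∃ e, s e = v}) =>
          (if v = (w : V) then 1 else 0)
            - LaurentPolynomial.T 1 *
              (Fintype.card {e : Ed // s e = (w : V) ∧ r e = v} : LaurentPolynomial ℤ)))) := by
  intro hsurj
  obtain ⟨N, hMN⟩ := rightInvAux hsurj
  by_cases hreg : ∀ v : V, ∃ e, s e = v
  · -- every vertex emits an edge : square case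
    set M' : Matrix V V (LaurentPolynomial ℤ) := sqMAux s r with hM'
    set N' : Matrix V V (LaurentPolynomial ℤ) := Matrix.of (fun w v => N ⟨w, hreg w⟩ v) with hN'
    have hkey : ∀ x : {v : V // ∃ e, s e = v},
        (⟨(x : V), hreg x⟩ : {v : V // ∃ e, s e = v}) = x := fun x => Subtype.ext rfl
    have hMN' : M' * N' = 1 := by
      ext i j
      rw [Matrix.mul_apply]
      have step : ∑ w : V, M' i w * N' w j
          = ∑ x : {v : V // ∃ e, s e = v},
              (Matrix.of (fun (v : V) (w : {v : V // ∃ e, s e = v}) =>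
                (if v = (w : V) then 1 else 0)
                  - LaurentPolynomial.T 1 *
                    (Fintype.card {e : Ed // s e = (w : V) ∧ r e = v} : LaurentPolynomial ℤ)))
                i x * N x j := by
        refine (Fintype.sum_equiv (Equiv.subtypeUnivEquiv hreg) _ _ fun x => ?_).symm
        simp only [hM', hN', sqMAux, Matrix.of_apply, Equiv.subtypeUnivEquiv_apply]
      rw [step, ← Matrix.mul_apply, hMN]
    have hdet : M'.det * N'.det = 1 := by rw [← Matrix.det_mul, hMN', Matrix.det_one]
    set B : Matrix V V ℂ := (adjMAux s r).map (Int.cast : ℤ → ℂ) with hB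
    -- the specialized matrix has nonzero determinant for every z : ℂ
    have hnz : ∀ z : ℂ, (1 - z • B).det ≠ 0 := by
      intro z
      rcases eq_or_ne z 0 with rfl | hz
      · simp
      have hmap : M'.map ⇑(evalLaurentAux (Units.mk0 z hz)) = 1 - z • B := by
        ext v w
        simp only [hM', sqMAux, Matrix.map_apply, Matrix.of_apply, map_sub, _root_.map_mul,
          map_natCast, apply_ite ⇑(evalLaurentAux (Units.mk0 z hz)), _root_.map_one, map_zero,
          Matrix.sub_apply, Matrix.smul_apply, Matrix.one_apply, hB, adjMAux, smul_eq_mul,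
          evalLaurentAux_T, Units.val_mk0]
        push_cast
        ring
      have h1 : (1 - z • B).det * (evalLaurentAux (Units.mk0 z hz)) N'.det = 1 := by
        rw [← hmap, ← RingHom.mapMatrix_apply, ← RingHom.map_det, ← _root_.map_mul, hdet,
          _root_.map_one]
      intro h0
      rw [h0, zero_mul] at h1
      exact zero_ne_one h1
    -- hence the reversed characteristic polynomial of B is constant 1
    have hrev : B.charpoly.reverse = 1 := by
      rw [Matrix.reverse_charpoly]
      have hdeg : B.charpolyRev.degree ≤ 0 := by
        by_contra hd
        push_neg at hd
        obtain ⟨z, hz⟩ := Complex.exists_root hd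
        exact hnz z (by rw [← evalCharpolyRevAux]; exact hz)
      have hC := Polynomial.eq_C_of_degree_le_zero hdeg
      rw [hC, Polynomial.coeff_zero_eq_eval_zero, Matrix.eval_charpolyRev, Polynomial.C_1]
    -- so B, hence the integer adjacency matrix, is nilpotent
    have hBn : B ^ (Fintype.card V) = 0 := by
      have h := B.aeval_self_charpoly
      rw [charpolyEqPowAux hrev] at h
      simpa using h
    have hAn : (adjMAux s r) ^ (Fintype.card V) = 0 := by
      have h2 : (Int.castRingHom ℂ).mapMatrix ((adjMAux s r) ^ (Fintype.card V)) = 0 := by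
        rw [_root_.map_pow, RingHom.mapMatrix_apply]
        have he : (adjMAux s r).map ⇑(Int.castRingHom ℂ) = B := rfl
        rw [he, hBn]
      rw [RingHom.mapMatrix_apply] at h2
      ext i j
      have h3 := congrFun (congrFun h2 i) j
      simp only [Matrix.map_apply, Matrix.zero_apply, map_intCast,
        Int.coe_castRingHom] at h3 ⊢
      exact_mod_cast h3
    -- but a matrix with a "cycle" cannot be nilpotent
    set ed : V → Ed := fun v => (hreg v).choose with heddef
    have hed : ∀ v, s (ed v) = v := fun v => (hreg v).choose_spec
    set f : V → V := fun v => r (ed v) with hfdef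
    have hA : ∀ i j, 0 ≤ adjMAux s r i j := fun i j => by
      simp only [adjMAux, Matrix.of_apply]
      positivity
    have hf : ∀ v, 1 ≤ adjMAux s r (f v) v := fun v => by
      have hne : Nonempty {e : Ed // s e = v ∧ r e = f v} := ⟨⟨ed v, hed v, rfl⟩⟩
      have hpos := Fintype.card_pos_iff.mpr hne
      simp only [adjMAux, Matrix.of_apply]
      exact_mod_cast hpos
    obtain ⟨v0⟩ := hV
    have hcontr := powGeAux hA hf (Fintype.card V) v0
    rw [hAn] at hcontr
    simp at hcontr
  · -- some vertex emits no edge : rank argument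
    push_neg at hreg
    obtain ⟨v0, hv0⟩ := hreg
    set φ := evalLaurentAux 1 with hφ
    set Mc := (Matrix.of (fun (v : V) (w : {v : V // ∃ e, s e = v}) =>
          (if v = (w : V) then 1 else 0)
            - LaurentPolynomial.T 1 *
              (Fintype.card {e : Ed // s e = (w : V) ∧ r e = v} : LaurentPolynomial ℤ))).map φ
      with hMc
    have h1 : Mc * (N.map φ) = 1 := by
      rw [hMc, ← Matrix.map_mul, hMN, Matrix.map_one ⇑φ φ.map_zero φ.map_one]
    have hr1 : Mc.rank ≤ Fintype.card {v : V // ∃ e, s e = v} := Matrix.rank_le_card_width _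
    have hr2 : Fintype.card V ≤ Mc.rank := by
      calc Fintype.card V = (1 : Matrix V V ℂ).rank := Matrix.rank_one.symm
        _ = (Mc * (N.map φ)).rank := by rw [h1]
        _ ≤ Mc.rank := Matrix.rank_mul_le_left _ _
    have hcard : Fintype.card {v : V // ∃ e, s e = v} < Fintype.card V :=
      Fintype.card_subtype_lt (x := v0) (by simpa using hv0)
    omega
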